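/- Fix u ∈ (0,1) and a finite set of posterior values a_1, ..., a_L ∈ [0,1] with min_i a_i ≤ u ≤ max_i a_i. Among all probability weight vectors (G_1,...,G_L) satisfying ∑_i a_i G_i = u, the mutual information h(u) − ∑_i G_i h(a_i) is maximized by the two-point distribution supported on indices attaining max_i a_i and min_i a_i, with weights G_{max} = (u − a_{min})/(a_{max} − a_{min}) and G_{min} = (a_{max} − u)/(a_{max} − a_{min}) (assuming a_{max} > a_{min}). -/

import Mathlib

open Finset Real

/-- Bimodal query optimality (discrete version): with the label marginal `u`
fixed and posteriors `a i` given, among all probability weight vectors `G` with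
`∑ a i * G i = u`, the mutual information `h(u) − ∑ G i h(a i)` is maximized by
the two-point distribution supported on the indices attaining the maximal and
minimal posterior values, with the stated weights. -/
theorem bimodal_query_maximizes_MI (u : ℝ) (hu : u ∈ Set.Ioo (0 : ℝ) 1)
    (h : ℝ → ℝ) (hh : ∀ a, h a = -a * log a - (1 - a) * log (1 - a))
    (L : ℕ) (a : Fin L → ℝ) (ha : ∀ i, a i ∈ Set.Icc (0 : ℝ) 1)
    (i₀ i₁ : Fin L)
    (hmax : ∀ i, a i ≤ a i₀) (hmin : ∀ i, a i₁ ≤ a i)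
    (hlt : a i₁ < a i₀) (hu₁ : a i₁ ≤ u) (hu₀ : u ≤ a i₀)
    (Gstar : Fin L → ℝ)
    (hGstar : Gstar = fun i =>
      if i = i₀ then (u - a i₁) / (a i₀ - a i₁)
      else if i = i₁ then (a i₀ - u) / (a i₀ - a i₁) else 0) :
    ((∀ i, 0 ≤ Gstar i) ∧ (∑ i, Gstar i) = 1 ∧ (∑ i, a i * Gstar i) = u) ∧
      ∀ G : Fin L → ℝ, (∀ i, 0 ≤ G i) → (∑ i, G i) = 1 →
        (∑ i, a i * G i) = u →
        h u - (∑ i, G i * h (a i)) ≤ h u - (∑ i, Gstar i * h (a i)) := by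
  have hd : (0:ℝ) < a i₀ - a i₁ := sub_pos.mpr hlt
  have hne : i₁ ≠ i₀ := fun e => absurd (congrArg a e) (ne_of_lt hlt)
  set d := a i₀ - a i₁ with hdd
  set c₀ := (u - a i₁) / d with hc₀
  set c₁ := (a i₀ - u) / d with hc₁
  -- generic sum computation for Gstar
  have key : ∀ f : Fin L → ℝ, ∑ i, Gstar i * f i = c₀ * f i₀ + c₁ * f i₁ := by
    intro f
    have hcongr : ∀ i ∈ Finset.univ, Gstar i * f i =
        (if i = i₀ then c₀ * f i₀ else 0) + (if i = i₁ then c₁ * f i₁ else 0) := by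
      intro i _
      rw [hGstar]
      by_cases h0 : i = i₀
      · subst h0; simp [hne.symm, ← hc₀]
      · by_cases h1 : i = i₁
        · subst h1; simp [h0, ← hc₁]
        · simp [h0, h1]
    rw [Finset.sum_congr rfl hcongr, Finset.sum_add_distrib]
    simp
  have hnn : ∀ i, 0 ≤ Gstar i := by
    intro i
    rw [hGstar]
    dsimp only
    split_ifs
    · exact div_nonneg (sub_nonneg.mpr hu₁) hd.le
    · exact div_nonneg (sub_nonneg.mpr hu₀) hd.le
    · exact le_refl 0
  have hsum1 : (∑ i, Gstar i) = 1 := by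
    have := key (fun _ => 1)
    simp only [mul_one] at this
    rw [this, hc₀, hc₁]
    field_simp
    rw [hdd]; ring
  have hsumu : (∑ i, a i * Gstar i) = u := by
    have h1 : (∑ i, a i * Gstar i) = ∑ i, Gstar i * a i := by
      exact Finset.sum_congr rfl fun i _ => mul_comm _ _
    rw [h1, key a, hc₀, hc₁]
    field_simp
    ring
  refine ⟨⟨hnn, hsum1, hsumu⟩, ?_⟩
  intro G hG hGsum hGu
  have hh' : ∀ x, h x = negMulLog x + negMulLog (1 - x) := by
    intro x; rw [hh]; simp [Real.negMulLog]; ring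
  -- chord inequality from concavity
  have chord : ∀ i, ((a i - a i₁)/d) * h (a i₀) + ((a i₀ - a i)/d) * h (a i₁) ≤ h (a i) := by
    intro i
    set s := (a i - a i₁)/d with hs'
    set t := (a i₀ - a i)/d with ht'
    have hs : 0 ≤ s := div_nonneg (sub_nonneg.mpr (hmin i)) hd.le
    have ht : 0 ≤ t := div_nonneg (sub_nonneg.mpr (hmax i)) hd.le
    have hts : t + s = 1 := by
      rw [ht', hs', ← add_div, div_eq_one_iff_eq hd.ne', hdd]
      ring
    have hcomb : t * a i₁ + s * a i₀ = a i := by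
      rw [ht', hs', div_mul_eq_mul_div, div_mul_eq_mul_div, ← add_div, div_eq_iff hd.ne', hdd]
      ring
    have hcomb' : t * (1 - a i₁) + s * (1 - a i₀) = 1 - a i := by
      linear_combination hts - hcomb
    have h1 := Real.concaveOn_negMulLog.2 (Set.mem_Ici.mpr (ha i₁).1)
      (Set.mem_Ici.mpr (ha i₀).1) ht hs hts
    have h2 := Real.concaveOn_negMulLog.2
      (Set.mem_Ici.mpr (by linarith [(ha i₁).2] : (0:ℝ) ≤ 1 - a i₁))
      (Set.mem_Ici.mpr (by linarith [(ha i₀).2] : (0:ℝ) ≤ 1 - a i₀)) ht hs hts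
    simp only [smul_eq_mul] at h1 h2
    rw [hcomb] at h1
    rw [hcomb'] at h2
    rw [hh' (a i), hh' (a i₀), hh' (a i₁)]
    linarith
  -- main inequality
    -- ∑ Gstar i * h (a i) ≤ ∑ G i * h (a i)
  have main : (∑ i, Gstar i * h (a i)) ≤ ∑ i, G i * h (a i) := by
    have step1 : (∑ i, Gstar i * h (a i)) = c₀ * h (a i₀) + c₁ * h (a i₁) := key _
    have step2 : (∑ i, (((a i - a i₁)/d) * h (a i₀) + ((a i₀ - a i)/d) * h (a i₁)) * G i)
        = c₀ * h (a i₀) + c₁ * h (a i₁) := by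
      have hptw : ∀ i ∈ Finset.univ,
          (((a i - a i₁)/d) * h (a i₀) + ((a i₀ - a i)/d) * h (a i₁)) * G i
          = (h (a i₀)/d) * (a i * G i) - (h (a i₀) * a i₁/d) * G i
            + ((h (a i₁) * a i₀/d) * G i - (h (a i₁)/d) * (a i * G i)) := by
        intro i _; ring
      rw [Finset.sum_congr rfl hptw, Finset.sum_add_distrib, Finset.sum_sub_distrib,
        Finset.sum_sub_distrib, ← Finset.mul_sum, ← Finset.mul_sum, ← Finset.mul_sum,
        ← Finset.mul_sum, hGsum, hGu, hc₀, hc₁]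
      field_simp
    rw [step1, ← step2]
    apply Finset.sum_le_sum
    intro i _
    rw [mul_comm (G i) (h (a i))]
    exact mul_le_mul_of_nonneg_right (chord i) (hG i)
  linarith
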